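/- Let ρ be a density matrix of a pure state and H_V a Hermitian matrix on a d-dimensional Hilbert space (d = 2^n), and let A_l be Hermitian. If E is drawn from a unitary 2-design ensemble, then the expectation over E of the derivative i·Tr(ρ E† [A_l, E H_V E†] E) is zero, i.e., E_E[ i⟨ψ|E†[A_l, E H_V E†]E|ψ⟩ ] = 0. -/

import Mathlib

open MeasureTheory Matrix Kronecker

noncomputable instance matrixMeasurableSpace {m n α : Type*} [MeasurableSpace α] :
    MeasurableSpace (Matrix m n α) :=
  inferInstanceAs (MeasurableSpace (m → n → α))

namespace TwoDesignAux

variable {d : ℕ}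

abbrev UG (d : ℕ) := Matrix.unitaryGroup (Fin d) ℂ

lemma entry_norm_le_one (U : UG d) (a b : Fin d) :
    ‖(U : Matrix (Fin d) (Fin d) ℂ) a b‖ ≤ 1 := by
  have h1 : ((U : Matrix (Fin d) (Fin d) ℂ) * star (U : Matrix (Fin d) (Fin d) ℂ)) a a = 1 :=
    by rw [U.2.2]; simp [Matrix.one_apply]
  rw [Matrix.mul_apply] at h1
  have h2 : ∑ c, (Complex.normSq ((U : Matrix (Fin d) (Fin d) ℂ) a c) : ℂ) = 1 := by
    rw [← h1]
    refine Finset.sum_congr rfl fun c _ => ?_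
    rw [Matrix.star_eq_conjTranspose, Matrix.conjTranspose_apply, ← Complex.mul_conj]
    rfl
  have h3 : ∑ c, Complex.normSq ((U : Matrix (Fin d) (Fin d) ℂ) a c) = 1 := by
    have := h2
    push_cast at this
    exact_mod_cast this
  have h4 : Complex.normSq ((U : Matrix (Fin d) (Fin d) ℂ) a b) ≤ 1 := by
    rw [← h3]
    exact Finset.single_le_sum (fun c _ => Complex.normSq_nonneg _) (Finset.mem_univ b)
  have h5 : ‖(U : Matrix (Fin d) (Fin d) ℂ) a b‖ ^ 2 ≤ 1 := by
    rw [Complex.sq_norm]; exact h4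
  nlinarith [norm_nonneg ((U : Matrix (Fin d) (Fin d) ℂ) a b)]

lemma measurable_entry (a b : Fin d) :
    Measurable fun U : UG d => (U : Matrix (Fin d) (Fin d) ℂ) a b :=
  (measurable_pi_apply b).comp ((measurable_pi_apply a).comp measurable_subtype_coe)

lemma measurable_conj_entry (M : Matrix (Fin d) (Fin d) ℂ) (a b : Fin d) :
    Measurable fun U : UG d =>
      ((U : Matrix (Fin d) (Fin d) ℂ) * M * (U : Matrix (Fin d) (Fin d) ℂ)ᴴ) a b := by
  simp only [Matrix.mul_apply, Matrix.conjTranspose_apply]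
  refine Finset.measurable_sum _ fun c _ => Measurable.mul ?_ ?_
  · exact Finset.measurable_sum _ fun e _ => (measurable_entry a e).mul measurable_const
  · exact RCLike.continuous_conj.measurable.comp (measurable_entry b c)

lemma integrable_conj_entry (μ : Measure (UG d)) [IsProbabilityMeasure μ]
    (M : Matrix (Fin d) (Fin d) ℂ) (a b : Fin d) :
    Integrable (fun U : UG d =>
      ((U : Matrix (Fin d) (Fin d) ℂ) * M * (U : Matrix (Fin d) (Fin d) ℂ)ᴴ) a b) μ := by
  refine Integrable.mono' (integrable_const (∑ c, ∑ e, ‖M e c‖))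
    ((measurable_conj_entry M a b).aestronglyMeasurable) ?_
  filter_upwards with U
  simp only [Matrix.mul_apply, Matrix.conjTranspose_apply]
  calc ‖∑ c, (∑ e, (U : Matrix (Fin d) (Fin d) ℂ) a e * M e c) *
        (starRingEnd ℂ) ((U : Matrix (Fin d) (Fin d) ℂ) b c)‖
      ≤ ∑ c, ‖(∑ e, (U : Matrix (Fin d) (Fin d) ℂ) a e * M e c) *
        (starRingEnd ℂ) ((U : Matrix (Fin d) (Fin d) ℂ) b c)‖ := norm_sum_le _ _
    _ ≤ ∑ c, ∑ e, ‖M e c‖ := by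
        refine Finset.sum_le_sum fun c _ => ?_
        rw [norm_mul]
        calc ‖∑ e, (U : Matrix (Fin d) (Fin d) ℂ) a e * M e c‖ *
              ‖(starRingEnd ℂ) ((U : Matrix (Fin d) (Fin d) ℂ) b c)‖
            ≤ (∑ e, ‖M e c‖) * 1 := by
              refine mul_le_mul ?_ ?_ (norm_nonneg _) (Finset.sum_nonneg fun _ _ => norm_nonneg _)
              · refine le_trans (norm_sum_le _ _) (Finset.sum_le_sum fun e _ => ?_)
                rw [norm_mul]
                calc ‖(U : Matrix (Fin d) (Fin d) ℂ) a e‖ * ‖M e c‖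
                    ≤ 1 * ‖M e c‖ :=
                      mul_le_mul_of_nonneg_right (entry_norm_le_one U a e) (norm_nonneg _)
                  _ = ‖M e c‖ := one_mul _
              · rw [RingHomIsometric.norm_map]; exact entry_norm_le_one U b c
          _ = ∑ e, ‖M e c‖ := mul_one _


noncomputable def F (μ : Measure (UG d)) (M : Matrix (Fin d) (Fin d) ℂ) :
    Matrix (Fin d) (Fin d) ℂ :=
  Matrix.of fun a b => ∫ U : UG d,
    ((U : Matrix (Fin d) (Fin d) ℂ) * M * (U : Matrix (Fin d) (Fin d) ℂ)ᴴ) a b ∂μ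

lemma F_apply (μ : Measure (UG d)) (M : Matrix (Fin d) (Fin d) ℂ) (a b : Fin d) :
    F μ M a b = ∫ U : UG d,
      ((U : Matrix (Fin d) (Fin d) ℂ) * M * (U : Matrix (Fin d) (Fin d) ℂ)ᴴ) a b ∂μ := rfl

lemma measurable_mul_left (V : UG d) : Measurable (fun U : UG d => V * U) := by
  have h : Measurable (fun U : UG d =>
      ((V : Matrix (Fin d) (Fin d) ℂ) * (U : Matrix (Fin d) (Fin d) ℂ))) := by
    refine measurable_pi_lambda _ fun a => measurable_pi_lambda _ fun b => ?_
    simp only [Matrix.mul_apply]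
    exact Finset.measurable_sum _ fun c _ => measurable_const.mul (measurable_entry c b)
  exact Measurable.subtype_mk h

lemma F_invariant (μ : Measure (UG d)) [IsProbabilityMeasure μ]
    (hinv : ∀ V : UG d, μ.map (fun U => V * U) = μ)
    (M : Matrix (Fin d) (Fin d) ℂ) (V : UG d) :
    (V : Matrix (Fin d) (Fin d) ℂ) * F μ M * (V : Matrix (Fin d) (Fin d) ℂ)ᴴ = F μ M := by
  ext a b
  set g : Fin d → Fin d → UG d → ℂ := fun e c U =>
    ((U : Matrix (Fin d) (Fin d) ℂ) * M * (U : Matrix (Fin d) (Fin d) ℂ)ᴴ) e c with hg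
  have int1 : ∀ e c, Integrable (fun U => (V : Matrix (Fin d) (Fin d) ℂ) a e * g e c U) μ :=
    fun e c => (integrable_conj_entry μ M e c).const_mul _
  have h1 : ∀ c, (∑ e, (V : Matrix (Fin d) (Fin d) ℂ) a e * F μ M e c)
      = ∫ U, ∑ e, (V : Matrix (Fin d) (Fin d) ℂ) a e * g e c U ∂μ := by
    intro c
    rw [integral_finset_sum _ (fun e _ => int1 e c)]
    exact Finset.sum_congr rfl fun e _ => (integral_const_mul _ _).symm
  have h2 : ((V : Matrix (Fin d) (Fin d) ℂ) * F μ M * (V : Matrix (Fin d) (Fin d) ℂ)ᴴ) a b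
      = ∫ U, ∑ c, (∑ e, (V : Matrix (Fin d) (Fin d) ℂ) a e * g e c U) *
          star ((V : Matrix (Fin d) (Fin d) ℂ) b c) ∂μ := by
    calc ((V : Matrix (Fin d) (Fin d) ℂ) * F μ M * (V : Matrix (Fin d) (Fin d) ℂ)ᴴ) a b
        = ∑ c, (∑ e, (V : Matrix (Fin d) (Fin d) ℂ) a e * F μ M e c) *
            star ((V : Matrix (Fin d) (Fin d) ℂ) b c) := by
          simp only [Matrix.mul_apply, Matrix.conjTranspose_apply]
      _ = ∑ c, (∫ U, ∑ e, (V : Matrix (Fin d) (Fin d) ℂ) a e * g e c U ∂μ) *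
            star ((V : Matrix (Fin d) (Fin d) ℂ) b c) :=
          Finset.sum_congr rfl fun c _ => by rw [h1 c]
      _ = ∑ c, ∫ U, (∑ e, (V : Matrix (Fin d) (Fin d) ℂ) a e * g e c U) *
            star ((V : Matrix (Fin d) (Fin d) ℂ) b c) ∂μ :=
          Finset.sum_congr rfl fun c _ => (integral_mul_const _ _).symm
      _ = ∫ U, ∑ c, (∑ e, (V : Matrix (Fin d) (Fin d) ℂ) a e * g e c U) *
            star ((V : Matrix (Fin d) (Fin d) ℂ) b c) ∂μ :=
          (integral_finset_sum _
            (fun c _ => (integrable_finset_sum _ (fun e _ => int1 e c)).mul_const _)).symm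
  have h3 : ((V : Matrix (Fin d) (Fin d) ℂ) * F μ M * (V : Matrix (Fin d) (Fin d) ℂ)ᴴ) a b
      = ∫ U, ((((V * U : UG d) : Matrix (Fin d) (Fin d) ℂ)) * M *
          (((V * U : UG d) : Matrix (Fin d) (Fin d) ℂ))ᴴ) a b ∂μ := by
    rw [h2]
    refine integral_congr_ae (Filter.Eventually.of_forall fun U => ?_)
    have : (((V * U : UG d) : Matrix (Fin d) (Fin d) ℂ)) * M *
        (((V * U : UG d) : Matrix (Fin d) (Fin d) ℂ))ᴴ
        = (V : Matrix (Fin d) (Fin d) ℂ) *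
          ((U : Matrix (Fin d) (Fin d) ℂ) * M * (U : Matrix (Fin d) (Fin d) ℂ)ᴴ) *
          (V : Matrix (Fin d) (Fin d) ℂ)ᴴ := by
      rw [Matrix.UnitaryGroup.mul_val, Matrix.conjTranspose_mul]
      simp only [mul_assoc]
    dsimp only
    rw [this]
    simp only [Matrix.mul_apply, Matrix.conjTranspose_apply, hg]
  rw [h3]
  have hmeas : AEStronglyMeasurable
      (fun U : UG d => ((U : Matrix (Fin d) (Fin d) ℂ) * M *
        (U : Matrix (Fin d) (Fin d) ℂ)ᴴ) a b) (μ.map (fun U => V * U)) := by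
    rw [hinv V]
    exact (measurable_conj_entry M a b).aestronglyMeasurable
  rw [show (∫ U, ((((V * U : UG d) : Matrix (Fin d) (Fin d) ℂ)) * M *
        (((V * U : UG d) : Matrix (Fin d) (Fin d) ℂ))ᴴ) a b ∂μ)
      = ∫ U, ((U : Matrix (Fin d) (Fin d) ℂ) * M *
        (U : Matrix (Fin d) (Fin d) ℂ)ᴴ) a b ∂(μ.map (fun U => V * U)) from
    (integral_map (measurable_mul_left V).aemeasurable hmeas).symm, hinv V]
  rfl

lemma F_offdiag (μ : Measure (UG d)) [IsProbabilityMeasure μ]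
    (hinv : ∀ V : UG d, μ.map (fun U => V * U) = μ)
    (M : Matrix (Fin d) (Fin d) ℂ) {a b : Fin d} (hab : a ≠ b) :
    F μ M a b = 0 := by
  set v : Fin d → ℂ := fun j => if j = a then -1 else 1 with hv
  have hmem : Matrix.diagonal v ∈ Matrix.unitaryGroup (Fin d) ℂ := by
    rw [Matrix.mem_unitaryGroup_iff, Matrix.star_eq_conjTranspose,
      Matrix.diagonal_conjTranspose, Matrix.diagonal_mul_diagonal]
    convert Matrix.diagonal_one with j
    by_cases h : j = a <;> simp [hv, h, Pi.star_apply]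
  have h := F_invariant μ hinv M ⟨Matrix.diagonal v, hmem⟩
  have hentry : (Matrix.diagonal v * F μ M * (Matrix.diagonal v)ᴴ) a b
      = v a * F μ M a b * star (v b) := by
    rw [Matrix.diagonal_conjTranspose, Matrix.mul_diagonal, Matrix.diagonal_mul, Pi.star_apply]
  have h3 : v a * F μ M a b * star (v b) = F μ M a b := by
    rw [← hentry]
    exact congrFun (congrFun h a) b
  have hva : v a = -1 := by simp [hv]
  have hvb : star (v b) = 1 := by simp [hv, Ne.symm hab, hab]
  rw [hva, hvb] at h3
  have : (2 : ℂ) * F μ M a b = 0 := by linear_combination -h3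
  simpa using this

lemma perm_conjTranspose (σ : Equiv.Perm (Fin d)) :
    ((σ.toPEquiv.toMatrix : Matrix (Fin d) (Fin d) ℂ))ᴴ = (σ.symm).toPEquiv.toMatrix := by
  ext i j
  simp only [Matrix.conjTranspose_apply, PEquiv.toMatrix_apply, Equiv.toPEquiv_apply,
    Option.mem_def, Option.some.injEq]
  by_cases h : i = σ j
  · simp [h, Equiv.symm_apply_apply]
  · have h2 : ¬ j = σ.symm i := fun hc => h (by simp [hc])
    have h3 : ¬ σ j = i := fun hc => h hc.symm
    have h4 : ¬ (Equiv.symm σ) i = j := fun hc => h2 hc.symm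
    simp [h3, h4]

lemma perm_mem_unitary (σ : Equiv.Perm (Fin d)) :
    (σ.toPEquiv.toMatrix : Matrix (Fin d) (Fin d) ℂ) ∈ Matrix.unitaryGroup (Fin d) ℂ := by
  rw [Matrix.mem_unitaryGroup_iff, Matrix.star_eq_conjTranspose, perm_conjTranspose,
    ← PEquiv.toMatrix_trans, ← Equiv.toPEquiv_trans]
  simp

lemma F_diag_eq (μ : Measure (UG d)) [IsProbabilityMeasure μ]
    (hinv : ∀ V : UG d, μ.map (fun U => V * U) = μ)
    (M : Matrix (Fin d) (Fin d) ℂ) (a b : Fin d) :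
    F μ M a a = F μ M b b := by
  set σ : Equiv.Perm (Fin d) := Equiv.swap a b with hσ
  have h := F_invariant μ hinv M ⟨σ.toPEquiv.toMatrix, perm_mem_unitary σ⟩
  have hP : ((σ.toPEquiv.toMatrix : Matrix (Fin d) (Fin d) ℂ)) * F μ M *
      ((σ.toPEquiv.toMatrix : Matrix (Fin d) (Fin d) ℂ))ᴴ = (F μ M).submatrix σ σ := by
    rw [perm_conjTranspose, PEquiv.toMatrix_toPEquiv_mul, PEquiv.mul_toMatrix_toPEquiv,
      Equiv.symm_symm]
    rfl
  have h2 : (F μ M).submatrix σ σ = F μ M := by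
    rw [← hP]
    exact h
  have := congrFun (congrFun h2 a) a
  simpa [Matrix.submatrix_apply, hσ, Equiv.swap_apply_left] using this.symm

lemma F_trace (μ : Measure (UG d)) [IsProbabilityMeasure μ]
    (M : Matrix (Fin d) (Fin d) ℂ) : (F μ M).trace = M.trace := by
  unfold Matrix.trace
  have : ∑ a, (F μ M).diag a = ∫ U : UG d, ∑ a : Fin d,
      ((U : Matrix (Fin d) (Fin d) ℂ) * M * (U : Matrix (Fin d) (Fin d) ℂ)ᴴ) a a ∂μ := by
    rw [integral_finset_sum _ (fun a _ => integrable_conj_entry μ M a a)]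
    rfl
  rw [this]
  have heq : ∀ U : UG d, ∑ a : Fin d,
      ((U : Matrix (Fin d) (Fin d) ℂ) * M * (U : Matrix (Fin d) (Fin d) ℂ)ᴴ) a a
      = ∑ a, M.diag a := by
    intro U
    have : ((U : Matrix (Fin d) (Fin d) ℂ) * M * (U : Matrix (Fin d) (Fin d) ℂ)ᴴ).trace
        = M.trace := by
      rw [Matrix.trace_mul_cycle]
      have hU : (U : Matrix (Fin d) (Fin d) ℂ)ᴴ * (U : Matrix (Fin d) (Fin d) ℂ) = 1 := by
        rw [← Matrix.star_eq_conjTranspose]; exact U.2.1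
      rw [hU, one_mul]
    exact this
  rw [integral_congr_ae (Filter.Eventually.of_forall heq), integral_const]
  simp

lemma F_zero (hd : 0 < d) (μ : Measure (UG d)) [IsProbabilityMeasure μ]
    (hinv : ∀ V : UG d, μ.map (fun U => V * U) = μ)
    (M : Matrix (Fin d) (Fin d) ℂ) (hM : M.trace = 0) (a b : Fin d) :
    F μ M a b = 0 := by
  by_cases hab : a = b
  · subst hab
    have htr : ∑ c : Fin d, F μ M c c = 0 := by
      have := F_trace μ M
      rw [hM] at this
      exact this
    have hall : ∀ c : Fin d, F μ M c c = F μ M a a := fun c => F_diag_eq μ hinv M c a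
    rw [Finset.sum_congr rfl (fun c _ => hall c), Finset.sum_const] at htr
    have hd' : (d : ℂ) ≠ 0 := Nat.cast_ne_zero.mpr hd.ne'
    simpa [Finset.card_univ, hd'] using htr
  · exact F_offdiag μ hinv M hab

end TwoDesignAux

/-- If `E` is drawn from a unitary 2-design ensemble `{p_i, E_i}` (whose first and
second moments agree with the Haar measure on `U(d)`), then the expectation over the
ensemble of the adversarial gradient `i Tr(ρ E† [A, E H_V E†] E)` vanishes, where
`ρ = |ψ⟩⟨ψ|` is a pure state, `H_V = V† H V` with `H` Hermitian and `V` unitary,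
and `A` (the circuit generator) is Hermitian. -/
theorem expectation_gradient_two_design_zero
    (n : ℕ) (hn : 1 ≤ n) (d : ℕ) (hd : d = 2 ^ n)
    -- the Haar probability measure on U(d), characterized by left invariance
    (μ : Measure (Matrix.unitaryGroup (Fin d) ℂ)) [IsProbabilityMeasure μ]
    (hinv : ∀ V : Matrix.unitaryGroup (Fin d) ℂ, μ.map (fun U => V * U) = μ)
    -- the finite ensemble {p_i, E_i}
    (ι : Type) [Fintype ι] (p : ι → ℝ) (hp : ∀ i, 0 ≤ p i) (hp1 : ∑ i, p i = 1)
    (E : ι → Matrix.unitaryGroup (Fin d) ℂ)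
    -- first-moment 2-design property
    (hdesign1 : ∀ M : Matrix (Fin d) (Fin d) ℂ, ∀ a b : Fin d,
      ∑ i, (p i : ℂ) *
          (((E i : Matrix (Fin d) (Fin d) ℂ)) * M * ((E i : Matrix (Fin d) (Fin d) ℂ))ᴴ) a b
        = ∫ U : Matrix.unitaryGroup (Fin d) ℂ,
            ((U : Matrix (Fin d) (Fin d) ℂ) * M * (U : Matrix (Fin d) (Fin d) ℂ)ᴴ) a b ∂μ)
    -- second-moment 2-design property (via the Kronecker square)
    (hdesign2 : ∀ M : Matrix (Fin d × Fin d) (Fin d × Fin d) ℂ, ∀ a b : Fin d × Fin d,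
      ∑ i, (p i : ℂ) *
          ((((E i : Matrix (Fin d) (Fin d) ℂ)) ⊗ₖ ((E i : Matrix (Fin d) (Fin d) ℂ))) * M *
            (((E i : Matrix (Fin d) (Fin d) ℂ)) ⊗ₖ ((E i : Matrix (Fin d) (Fin d) ℂ)))ᴴ) a b
        = ∫ U : Matrix.unitaryGroup (Fin d) ℂ,
            (((U : Matrix (Fin d) (Fin d) ℂ) ⊗ₖ (U : Matrix (Fin d) (Fin d) ℂ)) * M *
              ((U : Matrix (Fin d) (Fin d) ℂ) ⊗ₖ (U : Matrix (Fin d) (Fin d) ℂ))ᴴ) a b ∂μ)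
    -- the pure state ρ = |ψ⟩⟨ψ|
    (ψ : Fin d → ℂ) (hψ : star ψ ⬝ᵥ ψ = 1) (ρ : Matrix (Fin d) (Fin d) ℂ)
    (hρ : ρ = Matrix.vecMulVec ψ (star ψ))
    -- H_V = V† H V with H Hermitian and V unitary
    (H : Matrix (Fin d) (Fin d) ℂ) (hH : H.IsHermitian)
    (V : Matrix.unitaryGroup (Fin d) ℂ) (HV : Matrix (Fin d) (Fin d) ℂ)
    (hHV : HV = (V : Matrix (Fin d) (Fin d) ℂ)ᴴ * H * (V : Matrix (Fin d) (Fin d) ℂ))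
    -- the Hermitian generator A_l of the adversarial circuit
    (A : Matrix (Fin d) (Fin d) ℂ) (hA : A.IsHermitian) :
    ∑ i, (p i : ℂ) *
        (Complex.I * Matrix.trace (ρ * ((E i : Matrix (Fin d) (Fin d) ℂ))ᴴ *
          (A * ((E i : Matrix (Fin d) (Fin d) ℂ)) * HV * ((E i : Matrix (Fin d) (Fin d) ℂ))ᴴ -
           ((E i : Matrix (Fin d) (Fin d) ℂ)) * HV * ((E i : Matrix (Fin d) (Fin d) ℂ))ᴴ * A) *
          ((E i : Matrix (Fin d) (Fin d) ℂ)))) = 0 := by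
  classical
  set X : ι → Matrix (Fin d) (Fin d) ℂ := fun i => (E i : Matrix (Fin d) (Fin d) ℂ) with hX
  set M : Matrix (Fin d) (Fin d) ℂ := HV * ρ - ρ * HV with hM
  have hMtr : M.trace = 0 := by
    rw [hM, Matrix.trace_sub, Matrix.trace_mul_comm]
    ring
  have hd0 : 0 < d := by rw [hd]; positivity
  have hFzero : ∀ a b, TwoDesignAux.F μ M a b = 0 := TwoDesignAux.F_zero hd0 μ hinv M hMtr
  have key : ∀ i, (ρ * (X i)ᴴ *
        (A * X i * HV * (X i)ᴴ - X i * HV * (X i)ᴴ * A) * X i).trace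
      = ((X i * M * (X i)ᴴ) * A).trace := by
    intro i
    have hEE : (X i)ᴴ * X i = 1 := by
      rw [hX, ← Matrix.star_eq_conjTranspose]
      exact (E i).2.1
    have hL : ρ * (X i)ᴴ * (A * X i * HV * (X i)ᴴ - X i * HV * (X i)ᴴ * A) * X i
        = ρ * ((X i)ᴴ * (A * (X i * HV))) - ρ * (HV * ((X i)ᴴ * (A * X i))) := by
      rw [mul_sub, sub_mul]
      congr 1
      · simp only [mul_assoc]
        rw [hEE, mul_one]
      · simp only [mul_assoc]
        rw [show (X i)ᴴ * (X i * (HV * ((X i)ᴴ * (A * X i))))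
            = (X i)ᴴ * X i * (HV * ((X i)ᴴ * (A * X i))) from (mul_assoc _ _ _).symm,
          hEE, one_mul]
    have hR : (X i * M * (X i)ᴴ) * A
        = X i * (HV * ρ) * (X i)ᴴ * A - X i * (ρ * HV) * (X i)ᴴ * A := by
      rw [hM, mul_sub, sub_mul, sub_mul]
    have r1 : (X i * (HV * ρ) * (X i)ᴴ * A).trace
        = (ρ * ((X i)ᴴ * (A * (X i * HV)))).trace := by
      rw [show X i * (HV * ρ) * (X i)ᴴ * A = X i * ((HV * ρ) * ((X i)ᴴ * A)) by
        simp only [mul_assoc]]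
      rw [Matrix.trace_mul_comm]
      rw [show (HV * ρ) * ((X i)ᴴ * A) * X i = HV * (ρ * ((X i)ᴴ * (A * X i))) by
        simp only [mul_assoc]]
      rw [Matrix.trace_mul_comm]
      rw [show ρ * ((X i)ᴴ * (A * X i)) * HV = ρ * ((X i)ᴴ * (A * (X i * HV))) by
        simp only [mul_assoc]]
    have r2 : (X i * (ρ * HV) * (X i)ᴴ * A).trace
        = (ρ * (HV * ((X i)ᴴ * (A * X i)))).trace := by
      rw [show X i * (ρ * HV) * (X i)ᴴ * A = X i * ((ρ * HV) * ((X i)ᴴ * A)) by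
        simp only [mul_assoc]]
      rw [Matrix.trace_mul_comm]
      rw [show (ρ * HV) * ((X i)ᴴ * A) * X i = ρ * (HV * ((X i)ᴴ * (A * X i))) by
        simp only [mul_assoc]]
    rw [hL, hR, Matrix.trace_sub, Matrix.trace_sub, r1, r2]
  calc ∑ i, (p i : ℂ) *
        (Complex.I * Matrix.trace (ρ * (X i)ᴴ *
          (A * X i * HV * (X i)ᴴ - X i * HV * (X i)ᴴ * A) * X i))
      = Complex.I * ∑ i, (p i : ℂ) * ((X i * M * (X i)ᴴ) * A).trace := by
        rw [Finset.mul_sum]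
        refine Finset.sum_congr rfl fun i _ => ?_
        rw [key i]; ring
    _ = Complex.I * ∑ a, ∑ b, (∑ i, (p i : ℂ) * (X i * M * (X i)ᴴ) a b) * A b a := by
        congr 1
        calc ∑ i, (p i : ℂ) * ((X i * M * (X i)ᴴ) * A).trace
            = ∑ i, ∑ a, ∑ b, (p i : ℂ) * ((X i * M * (X i)ᴴ) a b * A b a) := by
              refine Finset.sum_congr rfl fun i _ => ?_
              simp only [Matrix.trace, Matrix.diag, Matrix.mul_apply, Finset.mul_sum]
          _ = ∑ a, ∑ b, ∑ i, (p i : ℂ) * ((X i * M * (X i)ᴴ) a b * A b a) := by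
              rw [Finset.sum_comm]
              exact Finset.sum_congr rfl fun a _ => Finset.sum_comm
          _ = ∑ a, ∑ b, (∑ i, (p i : ℂ) * (X i * M * (X i)ᴴ) a b) * A b a := by
              refine Finset.sum_congr rfl fun a _ => Finset.sum_congr rfl fun b _ => ?_
              rw [Finset.sum_mul]
              exact Finset.sum_congr rfl fun i _ => by ring
    _ = 0 := by
        have hz : ∀ a b : Fin d, (∑ i, (p i : ℂ) * (X i * M * (X i)ᴴ) a b) = 0 := by
          intro a b
          rw [hX]
          rw [hdesign1 M a b]
          exact hFzero a b
        simp only [hz, zero_mul, Finset.sum_const_zero, mul_zero]
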